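/- arXiv:1704.07228 — 2 statements merged into one kernel-verified Lean document; each statement's English description precedes it below -/
import Mathlib

section
/- For any real numbers θ₁, …, θ_ρ with |θᵢ| ≤ α for all i, let p be the probability vector with pᵢ = e^{θᵢ}/(e^{θ₁}+⋯+e^{θ_ρ}). Then the matrix e^{2α}(diag(p) − p pᵀ) − ((1/ρ)·I − (1/ρ²)·𝟙𝟙ᵀ) is positive semidefinite. -/
open Real Matrix

theorem stmt_0 (ρ : ℕ) (hρ : 0 < ρ) (α : ℝ) (θ : Fin ρ → ℝ)
    (hθ : ∀ i, |θ i| ≤ α)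
    (p : Fin ρ → ℝ)
    (hp : ∀ i, p i = Real.exp (θ i) / ∑ j, Real.exp (θ j)) :
    (Real.exp (2 * α) • (Matrix.diagonal p - Matrix.of (fun i j => p i * p j))
      - ((1 / (ρ : ℝ)) • (1 : Matrix (Fin ρ) (Fin ρ) ℝ)
        - (1 / (ρ : ℝ) ^ 2) • Matrix.of (fun _ _ => (1 : ℝ)))).PosSemidef := by
  have hρR : (0:ℝ) < (ρ:ℝ) := by exact_mod_cast hρ
  set E := Real.exp (2*α) with hE
  have hT : (0:ℝ) < ∑ j, Real.exp (θ j) :=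
    Finset.sum_pos (fun j _ => Real.exp_pos _) ⟨⟨0, hρ⟩, Finset.mem_univ _⟩
  have hpsum : ∑ i, p i = 1 := by
    simp only [hp]
    rw [← Finset.sum_div, div_self hT.ne']
  have hkey : ∀ i, 1/(ρ:ℝ) ≤ E * p i := by
    intro i
    rw [hp i, hE, ← mul_div_assoc, div_le_div_iff₀ hρR hT, one_mul]
    have h1 : Real.exp (-α) ≤ Real.exp (θ i) :=
      Real.exp_le_exp.2 (neg_le_of_abs_le (hθ i))
    have h2 : ∑ j, Real.exp (θ j) ≤ (ρ:ℝ) * Real.exp α := by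
      calc ∑ j, Real.exp (θ j) ≤ ∑ _j : Fin ρ, Real.exp α :=
            Finset.sum_le_sum (fun j _ => Real.exp_le_exp.2 (le_of_abs_le (hθ j)))
        _ = (ρ:ℝ) * Real.exp α := by simp [Finset.sum_const, mul_comm]
    calc ∑ j, Real.exp (θ j) ≤ (ρ:ℝ) * Real.exp α := h2
      _ ≤ Real.exp (2*α) * Real.exp (θ i) * (ρ:ℝ) := by
          have h3 : Real.exp α ≤ Real.exp (2*α) * Real.exp (θ i) := by
            rw [← Real.exp_add]
            apply Real.exp_le_exp.2
            nlinarith [neg_le_of_abs_le (hθ i)]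
          nlinarith
  rw [Matrix.posSemidef_iff_dotProduct_mulVec]
  constructor
  · ext i j
    simp only [Matrix.conjTranspose_apply, Matrix.sub_apply, Matrix.smul_apply,
      Matrix.diagonal_apply, Matrix.one_apply, Matrix.of_apply, smul_eq_mul, star,
      RCLike.star_def]
    rcases eq_or_ne i j with h | h
    · subst h; simp
    · simp [h, Ne.symm h, mul_comm (p i) (p j)]
  · intro x
    have hstar : star x = x := rfl
    rw [hstar]
    set μ := ∑ j, p j * x j with hμ
    set S := ∑ j, x j with hS
    have hmv : ∀ i, ((Real.exp (2 * α) • (Matrix.diagonal p - Matrix.of (fun i j => p i * p j))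
      - ((1 / (ρ : ℝ)) • (1 : Matrix (Fin ρ) (Fin ρ) ℝ)
        - (1 / (ρ : ℝ) ^ 2) • Matrix.of (fun _ _ => (1 : ℝ)))) *ᵥ x) i
        = E * (p i * x i - p i * μ) - x i / ρ + S / ρ^2 := by
      intro i
      have hof1 : ((Matrix.of (fun i j => p i * p j) : Matrix (Fin ρ) (Fin ρ) ℝ) *ᵥ x) i
          = p i * μ := by
        simp only [Matrix.mulVec, dotProduct, Matrix.of_apply, hμ, Finset.mul_sum]
        exact Finset.sum_congr rfl (fun j _ => by ring)
      have hof2 : ((Matrix.of (fun _ _ => (1:ℝ)) : Matrix (Fin ρ) (Fin ρ) ℝ) *ᵥ x) i = S := by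
        simp [Matrix.mulVec, dotProduct, hS]
      simp only [Matrix.sub_mulVec, Matrix.smul_mulVec, Pi.sub_apply, Pi.smul_apply,
        smul_eq_mul, Matrix.one_mulVec, Matrix.mulVec_diagonal, hof1, hof2]
      ring
    have hquad : x ⬝ᵥ ((Real.exp (2 * α) • (Matrix.diagonal p - Matrix.of (fun i j => p i * p j))
      - ((1 / (ρ : ℝ)) • (1 : Matrix (Fin ρ) (Fin ρ) ℝ)
        - (1 / (ρ : ℝ) ^ 2) • Matrix.of (fun _ _ => (1 : ℝ)))) *ᵥ x)
        = ∑ i, (E * p i - 1/ρ) * (x i - μ)^2 + (S/ρ - μ)^2 := by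
      simp only [dotProduct]
      rw [Finset.sum_congr rfl (fun i _ => by rw [hmv i])]
      have hL : ∑ i, x i * (E * (p i * x i - p i * μ) - x i / ρ + S / ρ^2)
          = E * (∑ i, p i * x i^2) - E*μ*μ - (1/ρ) * (∑ i, x i^2) + (S/ρ^2)*S := by
        have h1 : ∀ i : Fin ρ, x i * (E * (p i * x i - p i * μ) - x i / ρ + S / ρ^2)
            = E * (p i * x i^2) - (E*μ) * (p i * x i) - (1/ρ) * (x i^2) + (S/ρ^2) * x i :=
          fun i => by ring
        simp only [h1]
        rw [Finset.sum_add_distrib, Finset.sum_sub_distrib, Finset.sum_sub_distrib,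
          ← Finset.mul_sum, ← Finset.mul_sum, ← Finset.mul_sum, ← Finset.mul_sum, ← hμ, ← hS]
      have hR : ∑ i, (E * p i - 1/ρ) * (x i - μ)^2
          = E * (∑ i, p i * x i^2) - (2*E*μ)*μ + (E*μ^2)*1 - (1/ρ) * (∑ i, x i^2)
            + (2*μ/ρ)*S - (ρ:ℝ)*(μ^2/ρ) := by
        have h1 : ∀ i : Fin ρ, (E * p i - 1/ρ) * (x i - μ)^2
            = E * (p i * x i^2) - (2*E*μ) * (p i * x i) + (E*μ^2) * (p i)
              - (1/ρ) * (x i^2) + (2*μ/ρ) * x i - μ^2/ρ :=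
          fun i => by ring
        simp only [h1]
        rw [Finset.sum_sub_distrib, Finset.sum_add_distrib, Finset.sum_sub_distrib,
          Finset.sum_add_distrib, Finset.sum_sub_distrib, ← Finset.mul_sum, ← Finset.mul_sum,
          ← Finset.mul_sum, ← Finset.mul_sum, ← Finset.mul_sum, ← hμ, ← hS, hpsum,
          Finset.sum_const,
          Finset.card_univ, Fintype.card_fin, nsmul_eq_mul]
      rw [hL, hR]
      have : (ρ:ℝ) * (μ^2/ρ) = μ^2 := by field_simp
      rw [this]
      have : S/ρ^2 * S = (S/ρ)^2 := by ring
      rw [this]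
      ring
    rw [hquad]
    have h1 : 0 ≤ ∑ i, (E * p i - 1/ρ) * (x i - μ)^2 :=
      Finset.sum_nonneg fun i _ => mul_nonneg (by linarith [hkey i]) (sq_nonneg _)
    nlinarith [sq_nonneg (S/ρ - μ), h1]
end

section
/- Let A, B ∈ ℝ^{d₁×d₂} be matrices such that the row space of A is orthogonal to the row space of B and the column space of A is orthogonal to the column space of B. Then ‖A + B‖_* = ‖A‖_* + ‖B‖_*, where ‖·‖_* denotes the nuclear norm (sum of singular values). -/
open Matrix

/-- The nuclear norm of a real matrix: the sum of its singular values,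
realized as the square roots of the eigenvalues of `Aᴴ * A`. -/
noncomputable def nuclearNorm {d₁ d₂ : ℕ} (A : Matrix (Fin d₁) (Fin d₂) ℝ) : ℝ :=
  ∑ i, Real.sqrt ((Matrix.posSemidef_conjTranspose_mul_self A).1.eigenvalues i)

section Aux

variable {n : Type*} [Fintype n] [DecidableEq n]

open scoped MatrixOrder in
noncomputable def Matrix.PosSemidef.sqrt {M : Matrix n n ℝ} (_hM : M.PosSemidef) :
    Matrix n n ℝ := CFC.sqrt M

open scoped MatrixOrder in
lemma Matrix.PosSemidef.posSemidef_sqrt {M : Matrix n n ℝ} (hM : M.PosSemidef) :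
    hM.sqrt.PosSemidef :=
  Matrix.nonneg_iff_posSemidef.mp (CFC.sqrt_nonneg M)

open scoped MatrixOrder in
lemma Matrix.PosSemidef.sqrt_mul_self {M : Matrix n n ℝ} (hM : M.PosSemidef) :
    hM.sqrt * hM.sqrt = M :=
  CFC.sqrt_mul_sqrt_self M (Matrix.nonneg_iff_posSemidef.mpr hM)

open scoped MatrixOrder in
lemma Matrix.PosSemidef.eq_sqrt_of_sq_eq {A B : Matrix n n ℝ} (hA : A.PosSemidef)
    (hB : B.PosSemidef) (h : A ^ 2 = B) : A = hB.sqrt :=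
  (CFC.sqrt_unique (by rw [← sq]; exact h) (Matrix.nonneg_iff_posSemidef.mpr hA)).symm

open scoped MatrixOrder in
/-- trace of the PSD square root equals the sum of square roots of eigenvalues -/
lemma trace_sqrt_eq {M : Matrix n n ℝ} (hM : M.PosSemidef) :
    (hM.sqrt).trace = ∑ i, Real.sqrt (hM.1.eigenvalues i) := by
  rw [Matrix.PosSemidef.sqrt, CFC.sqrt_eq_cfc, cfc_nnreal_eq_real _ M, hM.1.cfc_eq,
    IsHermitian.cfc, Unitary.conjStarAlgAut_apply, trace_mul_cycle]
  have h1 : (star hM.1.eigenvectorUnitary : Matrix n n ℝ) * hM.1.eigenvectorUnitary.1 = 1 := by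
    exact_mod_cast Unitary.coe_star_mul_self hM.1.eigenvectorUnitary
  rw [h1, Matrix.one_mul, trace_diagonal]
  simp [fun i => max_eq_left (hM.eigenvalues_nonneg i)]

lemma sqrt_mul_sqrt_eq_zero {M N : Matrix n n ℝ} (hM : M.PosSemidef) (hN : N.PosSemidef)
    (h : M * N = 0) : hM.sqrt * hN.sqrt = 0 := by
  have hMs : hM.sqrtᴴ = hM.sqrt := hM.posSemidef_sqrt.1
  have hNs : hN.sqrtᴴ = hN.sqrt := hN.posSemidef_sqrt.1
  have h1 : hN.sqrt * M = 0 := by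
    rw [← conjTranspose_mul_self_eq_zero, conjTranspose_mul, hNs, hM.1,
      Matrix.mul_assoc, ← Matrix.mul_assoc hN.sqrt, hN.sqrt_mul_self,
      ← Matrix.mul_assoc, h, Matrix.zero_mul]
  rw [← conjTranspose_mul_self_eq_zero, conjTranspose_mul, hNs, hMs,
    Matrix.mul_assoc, ← Matrix.mul_assoc hM.sqrt, hM.sqrt_mul_self,
    ← Matrix.mul_assoc, h1, Matrix.zero_mul]

lemma sqrt_add {M N : Matrix n n ℝ} (hM : M.PosSemidef) (hN : N.PosSemidef)
    (hMN : M * N = 0) (hNM : N * M = 0) (h : (M + N).PosSemidef) :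
    h.sqrt = hM.sqrt + hN.sqrt := by
  refine ((hM.posSemidef_sqrt.add hN.posSemidef_sqrt).eq_sqrt_of_sq_eq h ?_).symm
  have h1 := sqrt_mul_sqrt_eq_zero hM hN hMN
  have h2 := sqrt_mul_sqrt_eq_zero hN hM hNM
  rw [pow_two, Matrix.add_mul, Matrix.mul_add, Matrix.mul_add,
    hM.sqrt_mul_self, hN.sqrt_mul_self, h1, h2]
  abel

lemma nuclearNorm_eq_trace' {d₁ d₂ : ℕ} (A : Matrix (Fin d₁) (Fin d₂) ℝ) :
    (∑ i, Real.sqrt ((Matrix.posSemidef_conjTranspose_mul_self A).1.eigenvalues i))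
      = (Matrix.posSemidef_conjTranspose_mul_self A).sqrt.trace :=
  (trace_sqrt_eq _).symm

lemma sqrt_congr {M N : Matrix n n ℝ} (hM : M.PosSemidef) (hN : N.PosSemidef)
    (h : M = N) : hM.sqrt = hN.sqrt := by subst h; rfl

end Aux

theorem stmt_13 {d₁ d₂ : ℕ} (A B : Matrix (Fin d₁) (Fin d₂) ℝ)
    (hrow : A * Bᵀ = 0) (hcol : Aᵀ * B = 0) :
    nuclearNorm (A + B) = nuclearNorm A + nuclearNorm B := by
  have hct : ∀ (C : Matrix (Fin d₁) (Fin d₂) ℝ), Cᴴ = Cᵀ := fun C =>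
    conjTranspose_eq_transpose_of_trivial C
  have hBA : B * Aᵀ = 0 := by
    have := congrArg transpose hrow
    rwa [transpose_mul, transpose_transpose, transpose_zero] at this
  have hBtA : Bᵀ * A = 0 := by
    have := congrArg transpose hcol
    rwa [transpose_mul, transpose_transpose, transpose_zero] at this
  have hM : (Aᴴ * A).PosSemidef := posSemidef_conjTranspose_mul_self A
  have hN : (Bᴴ * B).PosSemidef := posSemidef_conjTranspose_mul_self B
  have hMN : (Aᴴ * A) * (Bᴴ * B) = 0 := by
    rw [hct, hct, Matrix.mul_assoc, ← Matrix.mul_assoc A, hrow, Matrix.zero_mul,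
      Matrix.mul_zero]
  have hNM : (Bᴴ * B) * (Aᴴ * A) = 0 := by
    rw [hct, hct, Matrix.mul_assoc, ← Matrix.mul_assoc B, hBA, Matrix.zero_mul,
      Matrix.mul_zero]
  have hsum : (A + B)ᴴ * (A + B) = Aᴴ * A + Bᴴ * B := by
    rw [conjTranspose_add, Matrix.add_mul, Matrix.mul_add, Matrix.mul_add,
      hct, hct, hcol, hBtA]
    abel
  unfold nuclearNorm
  rw [nuclearNorm_eq_trace', nuclearNorm_eq_trace', nuclearNorm_eq_trace',
    sqrt_congr _ (hM.add hN) hsum, sqrt_add hM hN hMN hNM (hM.add hN),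
    trace_add]
end
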